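/- Soundness of continuous first-order logic: if Γ ⊢ φ in the proof system with axioms (all generalizations of) A1–A14 and modus ponens, then Γ ⊨ φ, i.e., every continuous pre-structure 𝔐 and assignment σ with 𝔐(γ,σ)=0 for all γ ∈ Γ satisfies 𝔐(φ,σ)=0. Consequently, every satisfiable set of formulae is consistent. -/

import Mathlib

/-- A continuous signature: relation and function symbols with arities. -/
structure Sig where
  Func : Type
  Rel : Type
  far : Func → ℕ
  rar : Rel → ℕ

/-- Terms of a continuous signature, over variables indexed by `ℕ`. -/
inductive Tm (L : Sig) : Type
  | var : ℕ → Tm L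
  | app : (f : L.Func) → (Fin (L.far f) → Tm L) → Tm L

/-- Formulae of continuous first-order logic. -/
inductive Fml (L : Sig) : Type
  | rel : (R : L.Rel) → (Fin (L.rar R) → Tm L) → Fml L
  | sub : Fml L → Fml L → Fml L
  | neg : Fml L → Fml L
  | half : Fml L → Fml L
  | sup : ℕ → Fml L → Fml L

variable {L : Sig}

/-- Variables occurring in a term. -/
def Tm.vars : Tm L → Set ℕ
  | .var x => {x}
  | .app _ a => ⋃ i, (a i).vars

/-- Free variables of a formula. -/
def Fml.fv : Fml L → Set ℕ
  | .rel _ a => ⋃ i, (a i).vars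
  | .sub φ ψ => φ.fv ∪ ψ.fv
  | .neg φ => φ.fv
  | .half φ => φ.fv
  | .sup x φ => φ.fv \ {x}

/-- Free substitution of the term `s` for the variable `x` in a term. -/
def Tm.subst (x : ℕ) (s : Tm L) : Tm L → Tm L
  | .var y => if y = x then s else .var y
  | .app f a => .app f fun i => Tm.subst x s (a i)

/-- Free substitution `φ[s/x]` of the term `s` for the variable `x`. -/
def Fml.subst (x : ℕ) (s : Tm L) : Fml L → Fml L
  | .rel R a => .rel R fun i => Tm.subst x s (a i)
  | .sub φ ψ => .sub (Fml.subst x s φ) (Fml.subst x s ψ)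
  | .neg φ => .neg (Fml.subst x s φ)
  | .half φ => .half (Fml.subst x s φ)
  | .sup y φ => if y = x then .sup y φ else .sup y (Fml.subst x s φ)

/-- Correctness of the free substitution `φ[s/x]`: no variable of `s` is
captured by a quantifier of `φ`. -/
def Fml.substOK (x : ℕ) (s : Tm L) : Fml L → Prop
  | .rel _ _ => True
  | .sub φ ψ => Fml.substOK x s φ ∧ Fml.substOK x s ψ
  | .neg φ => Fml.substOK x s φ
  | .half φ => Fml.substOK x s φ
  | .sup y φ => y = x ∨ ((x ∈ φ.fv → y ∉ s.vars) ∧ Fml.substOK x s φ)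


/-- A continuous pre-structure: a nonempty carrier interpreting function
symbols as operations and relation symbols as `[0,1]`-valued maps. -/
structure PreS (L : Sig) where
  M : Type
  ne : Nonempty M
  fn : (f : L.Func) → (Fin (L.far f) → M) → M
  rl : (R : L.Rel) → (Fin (L.rar R) → M) → ℝ
  rl_mem : ∀ (R : L.Rel) (a : Fin (L.rar R) → M), rl R a ∈ Set.Icc (0:ℝ) 1

/-- Interpretation of a term under an assignment. -/
def Tm.val (𝔐 : PreS L) (σ : ℕ → 𝔐.M) : Tm L → 𝔐.M
  | .var x => σ x
  | .app f a => 𝔐.fn f fun i => Tm.val 𝔐 σ (a i)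

/-- The value `𝔐(φ, σ) ∈ [0,1]` of a formula in a continuous pre-structure
under an assignment: `∸` is truncated subtraction, `¬` is `1 - ·`, `½`
halves, and `sup_x` takes the supremum over the carrier. -/
noncomputable def Fml.val (𝔐 : PreS L) : (ℕ → 𝔐.M) → Fml L → ℝ
  | σ, .rel R a => 𝔐.rl R fun i => Tm.val 𝔐 σ (a i)
  | σ, .sub φ ψ => max (Fml.val 𝔐 σ φ - Fml.val 𝔐 σ ψ) 0
  | σ, .neg φ => 1 - Fml.val 𝔐 σ φ
  | σ, .half φ => Fml.val 𝔐 σ φ / 2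
  | σ, .sup x φ => ⨆ a : 𝔐.M, Fml.val 𝔐 (Function.update σ x a) φ

/-- A continuous signature with a distinguished binary metric symbol and
moduli of uniform continuity for each symbol and argument. -/
structure MetSig extends Sig where
  dd : Rel
  dar : rar dd = 2
  δf : (f : Func) → Fin (far f) → ℝ → ℝ
  δr : (R : Rel) → Fin (rar R) → ℝ → ℝ

/-- The interpreted distance `d^𝔐(a,b)` in a pre-structure over a metric
signature. -/
noncomputable def dval (K : MetSig) (𝔐 : PreS K.toSig) (a b : 𝔐.M) : ℝ :=
  𝔐.rl K.dd fun j => if (j : ℕ) = 0 then a else b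

/-- A pre-structure over a metric signature is a *continuous pre-structure*
when `d` is interpreted as a pseudo-metric and every symbol obeys its moduli
of uniform continuity (which take positive values on positive arguments). -/
structure IsMetPre (K : MetSig) (𝔐 : PreS K.toSig) : Prop where
  refl : ∀ a, dval K 𝔐 a a = 0
  symm : ∀ a b, dval K 𝔐 a b = dval K 𝔐 b a
  triangle : ∀ a b c, dval K 𝔐 a c ≤ dval K 𝔐 a b + dval K 𝔐 b c
  δf_pos : ∀ (f : K.Func) (i : Fin (K.far f)) (ε : ℝ), 0 < ε → 0 < K.δf f i ε
  δr_pos : ∀ (R : K.Rel) (i : Fin (K.rar R)) (ε : ℝ), 0 < ε → 0 < K.δr R i ε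
  ucf : ∀ (f : K.Func) (i : Fin (K.far f)) (ε : ℝ), 0 < ε → ε ≤ 1 →
    ∀ a b : Fin (K.far f) → 𝔐.M, (∀ j, j ≠ i → a j = b j) →
      dval K 𝔐 (a i) (b i) < K.δf f i ε →
      dval K 𝔐 (𝔐.fn f a) (𝔐.fn f b) ≤ ε
  ucr : ∀ (R : K.Rel) (i : Fin (K.rar R)) (ε : ℝ), 0 < ε → ε ≤ 1 →
    ∀ a b : Fin (K.rar R) → 𝔐.M, (∀ j, j ≠ i → a j = b j) →
      dval K 𝔐 (a i) (b i) < K.δr R i ε →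
      |𝔐.rl R a - 𝔐.rl R b| ≤ ε

/-- The atomic distance formula `d t₁ t₂`. -/
def dfml (K : MetSig) (t₁ t₂ : Tm K.toSig) : Fml K.toSig :=
  Fml.rel K.dd fun j => if (j : ℕ) = 0 then t₁ else t₂

/-- The derived conjunction `φ ∧ ψ := φ ∸ (φ ∸ ψ)` (semantically, min). -/
def Fml.and {L : Sig} (φ ψ : Fml L) : Fml L := φ.sub (φ.sub ψ)

/-- The formula `1 := ¬(φ ∸ φ)`. -/
def oneFml (K : MetSig) : Fml K.toSig :=
  ((dfml K (Tm.var 0) (Tm.var 0)).sub (dfml K (Tm.var 0) (Tm.var 0))).neg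

/-- The dyadic constant formulae with their values: generated from `1`
(of value 1) by `¬`, `∸`, and halving. -/
inductive DyFml (K : MetSig) : Fml K.toSig → ℝ → Prop
  | one : DyFml K (oneFml K) 1
  | neg {d : Fml K.toSig} {r : ℝ} : DyFml K d r → DyFml K d.neg (1 - r)
  | sub {d d' : Fml K.toSig} {r r' : ℝ} : DyFml K d r → DyFml K d' r' →
      DyFml K (d.sub d') (max (r - r') 0)
  | half {d : Fml K.toSig} {r : ℝ} : DyFml K d r → DyFml K d.half (r / 2)

/-- The formula `2^{-n}`: `n`-fold halving of `1`. -/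
def dyn (K : MetSig) : ℕ → Fml K.toSig
  | 0 => oneFml K
  | n + 1 => (dyn K n).half

/-- The axioms of continuous first-order logic over a signature with a
metric: all generalizations of the schemata A1–A14. -/
inductive MAx (K : MetSig) : Fml K.toSig → Prop
  | a1 (φ ψ) : MAx K ((Fml.sub φ ψ).sub φ)
  | a2 (φ ψ χ) : MAx K (((Fml.sub χ φ).sub (Fml.sub χ ψ)).sub (ψ.sub φ))
  | a3 (φ ψ) : MAx K ((Fml.sub φ (Fml.sub φ ψ)).sub (ψ.sub (ψ.sub φ)))
  | a4 (φ ψ) : MAx K ((Fml.sub φ ψ).sub ((Fml.neg ψ).sub (Fml.neg φ)))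
  | a5 (φ) : MAx K ((Fml.half φ).sub (φ.sub φ.half))
  | a6 (φ) : MAx K ((Fml.sub φ φ.half).sub φ.half)
  | a7 (x : ℕ) (φ ψ) :
      MAx K (((Fml.sup x ψ).sub (Fml.sup x φ)).sub (Fml.sup x (ψ.sub φ)))
  | a8 (x : ℕ) (t : Tm K.toSig) (φ) : Fml.substOK x t φ →
      MAx K ((Fml.subst x t φ).sub (Fml.sup x φ))
  | a9 (x : ℕ) (φ) : x ∉ Fml.fv φ → MAx K ((Fml.sup x φ).sub φ)
  | a10 (z : ℕ) : MAx K (dfml K (Tm.var z) (Tm.var z))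
  | a11 (z w : ℕ) :
      MAx K ((dfml K (Tm.var z) (Tm.var w)).sub (dfml K (Tm.var w) (Tm.var z)))
  | a12 (x y z : ℕ) :
      MAx K (((dfml K (Tm.var x) (Tm.var z)).sub
        (dfml K (Tm.var x) (Tm.var y))).sub (dfml K (Tm.var y) (Tm.var z)))
  | a13 (f : K.Func) (i : Fin (K.far f)) (ε : ℝ) (q r : Fml K.toSig)
      (qv rv : ℝ) (z w : ℕ) (xs : Fin (K.far f) → ℕ) :
      0 < ε → ε ≤ 1 → DyFml K q qv → DyFml K r rv → ε < rv →
      qv < K.δf f i ε →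
      MAx K ((q.sub (dfml K (Tm.var z) (Tm.var w))).and
        ((dfml K (Tm.app f fun j => if j = i then Tm.var z else Tm.var (xs j))
          (Tm.app f fun j => if j = i then Tm.var w else Tm.var (xs j))).sub r))
  | a14 (R : K.Rel) (i : Fin (K.rar R)) (ε : ℝ) (q r : Fml K.toSig)
      (qv rv : ℝ) (z w : ℕ) (xs : Fin (K.rar R) → ℕ) :
      0 < ε → ε ≤ 1 → DyFml K q qv → DyFml K r rv → ε < rv →
      qv < K.δr R i ε →
      MAx K ((q.sub (dfml K (Tm.var z) (Tm.var w))).and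
        (((Fml.rel R fun j => if j = i then Tm.var z else Tm.var (xs j)).sub
          (Fml.rel R fun j => if j = i then Tm.var w else Tm.var (xs j))).sub r))
  | gen (x : ℕ) (φ) : MAx K φ → MAx K (Fml.sup x φ)

/-- Derivability in continuous first-order logic with a metric, with modus
ponens as the only rule of inference. -/
inductive MDeriv (K : MetSig) : Set (Fml K.toSig) → Fml K.toSig → Prop
  | ax {Γ φ} : MAx K φ → MDeriv K Γ φ
  | hyp {Γ φ} : φ ∈ Γ → MDeriv K Γ φ
  | mp {Γ φ ψ} : MDeriv K Γ φ → MDeriv K Γ (Fml.sub ψ φ) → MDeriv K Γ ψ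

/-- Consistency: some formula is not provable. -/
def MConsistent (K : MetSig) (Γ : Set (Fml K.toSig)) : Prop :=
  ∃ φ : Fml K.toSig, ¬ MDeriv K Γ φ

section Soundness

variable {L : Sig}

lemma val_mem (𝔐 : PreS L) : ∀ (φ : Fml L) (σ : ℕ → 𝔐.M),
    Fml.val 𝔐 σ φ ∈ Set.Icc (0:ℝ) 1 := by
  intro φ
  induction φ with
  | rel R a => intro σ; exact 𝔐.rl_mem _ _
  | sub φ ψ ihφ ihψ =>
    intro σ
    have h1 := ihφ σ; have h2 := ihψ σ
    simp only [Set.mem_Icc] at *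
    refine ⟨le_max_right _ _, max_le (by linarith [h1.2, h2.1]) (by norm_num)⟩
  | neg φ ih =>
    intro σ; have h := ih σ; simp only [Fml.val, Set.mem_Icc] at *
    constructor <;> linarith [h.1, h.2]
  | half φ ih =>
    intro σ; have h := ih σ; simp only [Fml.val, Set.mem_Icc] at *
    constructor <;> linarith [h.1, h.2]
  | sup x φ ih =>
    intro σ
    haveI := 𝔐.ne
    have hb : BddAbove (Set.range fun a => Fml.val 𝔐 (Function.update σ x a) φ) :=
      ⟨1, by rintro r ⟨a, rfl⟩; exact (ih _).2⟩
    refine ⟨le_ciSup_of_le hb (Classical.arbitrary _) (ih _).1, ciSup_le fun a => (ih _).2⟩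

lemma val_nonneg (𝔐 : PreS L) (φ : Fml L) (σ : ℕ → 𝔐.M) : 0 ≤ Fml.val 𝔐 σ φ :=
  (val_mem 𝔐 φ σ).1

lemma val_le_one (𝔐 : PreS L) (φ : Fml L) (σ : ℕ → 𝔐.M) : Fml.val 𝔐 σ φ ≤ 1 :=
  (val_mem 𝔐 φ σ).2

lemma bddA (𝔐 : PreS L) (σ : ℕ → 𝔐.M) (x : ℕ) (φ : Fml L) :
    BddAbove (Set.range fun a => Fml.val 𝔐 (Function.update σ x a) φ) :=
  ⟨1, by rintro r ⟨a, rfl⟩; exact val_le_one 𝔐 φ _⟩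

lemma tm_val_congr (𝔐 : PreS L) (t : Tm L) : ∀ σ σ' : ℕ → 𝔐.M,
    (∀ z ∈ t.vars, σ z = σ' z) → t.val 𝔐 σ = t.val 𝔐 σ' := by
  induction t with
  | var y => intro σ σ' h; exact h y rfl
  | app f a ih =>
    intro σ σ' h
    simp only [Tm.val]
    congr 1; funext i
    exact ih i σ σ' fun z hz => h z (Set.mem_iUnion.2 ⟨i, hz⟩)

lemma fml_val_congr (𝔐 : PreS L) (φ : Fml L) : ∀ σ σ' : ℕ → 𝔐.M,
    (∀ z ∈ φ.fv, σ z = σ' z) → Fml.val 𝔐 σ φ = Fml.val 𝔐 σ' φ := by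
  induction φ with
  | rel R a =>
    intro σ σ' h
    simp only [Fml.val]
    congr 1; funext i
    exact tm_val_congr 𝔐 (a i) σ σ' fun z hz => h z (Set.mem_iUnion.2 ⟨i, hz⟩)
  | sub φ ψ ihφ ihψ =>
    intro σ σ' h
    simp only [Fml.val]
    rw [ihφ σ σ' fun z hz => h z (Or.inl hz), ihψ σ σ' fun z hz => h z (Or.inr hz)]
  | neg φ ih => intro σ σ' h; simp only [Fml.val]; rw [ih σ σ' h]
  | half φ ih => intro σ σ' h; simp only [Fml.val]; rw [ih σ σ' h]
  | sup x φ ih =>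
    intro σ σ' h
    simp only [Fml.val]
    apply iSup_congr
    intro a
    apply ih
    intro z hz
    rcases eq_or_ne z x with rfl | hzx
    · simp [Function.update]
    · simp only [Function.update, dif_neg hzx]
      exact h z ⟨hz, hzx⟩

lemma tm_subst_val (𝔐 : PreS L) (x : ℕ) (s : Tm L) (t : Tm L) (σ : ℕ → 𝔐.M) :
    Tm.val 𝔐 σ (Tm.subst x s t) = Tm.val 𝔐 (Function.update σ x (Tm.val 𝔐 σ s)) t := by
  induction t with
  | var y =>
    simp only [Tm.subst]
    rcases eq_or_ne y x with rfl | h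
    · simp [Tm.val]
    · simp [Tm.val, h, Function.update_of_ne h]
  | app f a ih =>
    simp only [Tm.subst, Tm.val]
    congr 1
    funext i
    exact ih i

lemma fml_subst_val (𝔐 : PreS L) (x : ℕ) (s : Tm L) (φ : Fml L) :
    ∀ σ : ℕ → 𝔐.M, Fml.substOK x s φ →
    Fml.val 𝔐 σ (φ.subst x s) = Fml.val 𝔐 (Function.update σ x (s.val 𝔐 σ)) φ := by
  induction φ with
  | rel R a =>
    intro σ _
    simp only [Fml.subst, Fml.val]
    congr 1; funext i; exact tm_subst_val 𝔐 x s (a i) σ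
  | sub φ ψ ihφ ihψ =>
    intro σ h
    simp only [Fml.subst, Fml.val]
    rw [ihφ σ h.1, ihψ σ h.2]
  | neg φ ih => intro σ h; simp only [Fml.subst, Fml.val]; rw [ih σ h]
  | half φ ih => intro σ h; simp only [Fml.subst, Fml.val]; rw [ih σ h]
  | sup y φ ih =>
    intro σ h
    rcases eq_or_ne y x with rfl | hyx
    · simp only [Fml.subst, if_pos]
      apply fml_val_congr
      intro z hz
      have hzx : z ≠ y := hz.2
      rw [Function.update_of_ne hzx]
    · rcases h with rfl | ⟨hfv, hok⟩
      · exact absurd rfl hyx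
      simp only [Fml.subst, if_neg hyx, Fml.val]
      apply iSup_congr
      intro a
      rw [ih _ hok]
      apply fml_val_congr
      intro z hz
      rcases eq_or_ne z x with rfl | hzx
      · rw [Function.update_self, Function.update_of_ne (Ne.symm hyx), Function.update_self]
        refine tm_val_congr 𝔐 s _ _ fun w hw => Function.update_of_ne (fun hwy => hfv hz ?_) _ _
        rwa [hwy] at hw
      · rcases eq_or_ne z y with rfl | hzy
        · rw [Function.update_of_ne hzx, Function.update_self, Function.update_self]
        · rw [Function.update_of_ne hzx, Function.update_of_ne hzy,
            Function.update_of_ne hzy, Function.update_of_ne hzx]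

lemma sub_val (𝔐 : PreS L) (φ ψ : Fml L) (σ : ℕ → 𝔐.M) :
    Fml.val 𝔐 σ (φ.sub ψ) = max (Fml.val 𝔐 σ φ - Fml.val 𝔐 σ ψ) 0 := rfl

lemma sub_val_zero {a b : ℝ} (h : a ≤ b) : max (a - b) 0 = 0 :=
  max_eq_right (by linarith)

lemma sub_val_zero_iff {a b : ℝ} : max (a - b) 0 = 0 ↔ a ≤ b := by
  rw [max_eq_right_iff, sub_nonpos]

end Soundness


section Soundness2

lemma dfml_val (K : MetSig) (𝔐 : PreS K.toSig) (σ : ℕ → 𝔐.M) (t₁ t₂ : Tm K.toSig) :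
    Fml.val 𝔐 σ (dfml K t₁ t₂) = dval K 𝔐 (Tm.val 𝔐 σ t₁) (Tm.val 𝔐 σ t₂) := by
  simp only [dfml, dval, Fml.val]
  congr 1
  funext j
  split <;> rfl

lemma dfml_var_val (K : MetSig) (𝔐 : PreS K.toSig) (σ : ℕ → 𝔐.M) (z w : ℕ) :
    Fml.val 𝔐 σ (dfml K (Tm.var z) (Tm.var w)) = dval K 𝔐 (σ z) (σ w) :=
  dfml_val K 𝔐 σ _ _

lemma dval_nonneg (K : MetSig) (𝔐 : PreS K.toSig) (a b : 𝔐.M) : 0 ≤ dval K 𝔐 a b :=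
  (𝔐.rl_mem _ _).1

lemma dy_val (K : MetSig) {d : Fml K.toSig} {r : ℝ} (h : DyFml K d r)
    (𝔐 : PreS K.toSig) (σ : ℕ → 𝔐.M) : Fml.val 𝔐 σ d = r := by
  induction h with
  | one => simp [Fml.val, oneFml]
  | neg _ ih => simp [Fml.val, ih]
  | sub _ _ ih ih' => simp [Fml.val, ih, ih']
  | half _ ih => simp [Fml.val, ih]

lemma and_zero (𝔐 : PreS L) (φ ψ : Fml L) (σ : ℕ → 𝔐.M)
    (h : Fml.val 𝔐 σ φ = 0 ∨ Fml.val 𝔐 σ ψ = 0) :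
    Fml.val 𝔐 σ (φ.and ψ) = 0 := by
  have ha := val_nonneg 𝔐 φ σ
  have hb := val_nonneg 𝔐 ψ σ
  simp only [Fml.and, Fml.val]
  apply max_eq_right
  rcases h with h | h
  · rw [h]
    have := le_max_right (0 - Fml.val 𝔐 σ ψ) (0:ℝ)
    linarith
  · rw [h]
    have := le_max_left (Fml.val 𝔐 σ φ - 0) (0:ℝ)
    linarith

lemma trunc_min {a b : ℝ} (ha : 0 ≤ a) (hb : 0 ≤ b) :
    max (a - max (a - b) 0) 0 = min a b := by
  rcases le_total a b with h | h
  · rw [max_eq_right (sub_nonpos.2 h), sub_zero, max_eq_left ha, min_eq_left h]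
  · rw [max_eq_left (sub_nonneg.2 h), sub_sub_cancel, max_eq_left hb, min_eq_right h]

lemma trunc_sub_trunc {p q c : ℝ} : max (c - p) 0 - max (c - q) 0 ≤ max (q - p) 0 := by
  have h1 := le_max_left (q - p) (0:ℝ)
  have h2 := le_max_right (q - p) (0:ℝ)
  have h3 := le_max_left (c - q) (0:ℝ)
  have h4 := le_max_right (c - q) (0:ℝ)
  rcases le_total (c - p) 0 with h | h
  · rw [max_eq_right h]; linarith
  · rw [max_eq_left h]; linarith

lemma ax_sound (K : MetSig) {φ : Fml K.toSig} (h : MAx K φ) (𝔐 : PreS K.toSig)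
    (hM : IsMetPre K 𝔐) : ∀ σ : ℕ → 𝔐.M, Fml.val 𝔐 σ φ = 0 := by
  haveI := 𝔐.ne
  induction h with
  | a1 φ ψ =>
    intro σ
    rw [sub_val, sub_val]
    exact sub_val_zero (max_le (by linarith [val_nonneg 𝔐 ψ σ]) (val_nonneg 𝔐 φ σ))
  | a2 φ ψ χ =>
    intro σ
    simp only [Fml.val]
    exact sub_val_zero (max_le trunc_sub_trunc (le_max_right _ _))
  | a3 φ ψ =>
    intro σ
    rw [sub_val, sub_val, sub_val, sub_val, sub_val,
      trunc_min (val_nonneg 𝔐 φ σ) (val_nonneg 𝔐 ψ σ),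
      trunc_min (val_nonneg 𝔐 ψ σ) (val_nonneg 𝔐 φ σ), min_comm]
    exact sub_val_zero le_rfl
  | a4 φ ψ =>
    intro σ
    rw [sub_val, sub_val, sub_val]
    apply sub_val_zero
    apply max_le
    · have := le_max_left ((1 - Fml.val 𝔐 σ ψ) - (1 - Fml.val 𝔐 σ φ)) (0:ℝ)
      simp only [Fml.val]
      linarith
    · exact le_max_right _ _
  | a5 φ =>
    intro σ
    rw [sub_val, sub_val]
    apply sub_val_zero
    have := le_max_left (Fml.val 𝔐 σ φ - Fml.val 𝔐 σ φ.half) (0:ℝ)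
    simp only [Fml.val] at *
    linarith
  | a6 φ =>
    intro σ
    rw [sub_val, sub_val]
    apply sub_val_zero
    apply max_le
    · simp only [Fml.val]; linarith
    · simp only [Fml.val]; linarith [val_nonneg 𝔐 φ σ]
  | a7 x φ ψ =>
    intro σ
    rw [sub_val, sub_val]
    apply sub_val_zero
    apply max_le ?_ (val_nonneg 𝔐 (Fml.sup x (ψ.sub φ)) σ)
    rw [sub_le_iff_le_add]
    show (⨆ a, Fml.val 𝔐 (Function.update σ x a) ψ) ≤
      Fml.val 𝔐 σ (Fml.sup x (ψ.sub φ)) + ⨆ a, Fml.val 𝔐 (Function.update σ x a) φ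
    refine ciSup_le fun a => ?_
    have h1 : Fml.val 𝔐 (Function.update σ x a) (ψ.sub φ) ≤
        Fml.val 𝔐 σ (Fml.sup x (ψ.sub φ)) := le_ciSup (bddA 𝔐 σ x (ψ.sub φ)) a
    have h2 : Fml.val 𝔐 (Function.update σ x a) φ ≤
        ⨆ a, Fml.val 𝔐 (Function.update σ x a) φ := le_ciSup (bddA 𝔐 σ x φ) a
    have h3 : Fml.val 𝔐 (Function.update σ x a) ψ - Fml.val 𝔐 (Function.update σ x a) φ ≤
        Fml.val 𝔐 (Function.update σ x a) (ψ.sub φ) := by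
      rw [sub_val]; exact le_max_left _ _
    linarith
  | a8 x t φ hOK =>
    intro σ
    rw [sub_val]
    apply sub_val_zero
    rw [fml_subst_val 𝔐 x t φ σ hOK]
    exact le_ciSup (bddA 𝔐 σ x φ) _
  | a9 x φ hx =>
    intro σ
    rw [sub_val]
    apply sub_val_zero
    show (⨆ a, Fml.val 𝔐 (Function.update σ x a) φ) ≤ Fml.val 𝔐 σ φ
    refine ciSup_le fun a => le_of_eq (fml_val_congr 𝔐 φ _ _ fun z hz => ?_)
    refine Function.update_of_ne (fun h => hx ?_) _ _
    rwa [h] at hz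
  | a10 z =>
    intro σ
    rw [dfml_var_val]
    exact hM.refl _
  | a11 z w =>
    intro σ
    rw [sub_val, dfml_var_val, dfml_var_val]
    exact sub_val_zero (le_of_eq (hM.symm _ _))
  | a12 x y z =>
    intro σ
    rw [sub_val, sub_val, dfml_var_val, dfml_var_val, dfml_var_val]
    apply sub_val_zero
    apply max_le
    · linarith [hM.triangle (σ x) (σ y) (σ z)]
    · exact dval_nonneg K 𝔐 _ _
  | a13 f i ε q r qv rv z w xs hε hε1 hq hr hεr hδ =>
    intro σ
    rcases le_or_gt qv (dval K 𝔐 (σ z) (σ w)) with h | h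
    · apply and_zero
      left
      rw [sub_val, dy_val K hq 𝔐 σ, dfml_var_val]
      exact sub_val_zero h
    · apply and_zero
      right
      rw [sub_val, dy_val K hr 𝔐 σ, dfml_val]
      apply sub_val_zero
      simp only [Tm.val]
      set a : Fin (K.far f) → 𝔐.M :=
        fun j => Tm.val 𝔐 σ (if j = i then Tm.var z else Tm.var (xs j)) with ha
      set b : Fin (K.far f) → 𝔐.M :=
        fun j => Tm.val 𝔐 σ (if j = i then Tm.var w else Tm.var (xs j)) with hb
      have hab : ∀ j, j ≠ i → a j = b j := by
        intro j hj; simp [ha, hb, if_neg hj]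
      have hai : a i = σ z := by simp [ha, Tm.val]
      have hbi : b i = σ w := by simp [hb, Tm.val]
      have hd : dval K 𝔐 (a i) (b i) < K.δf f i ε := by
        rw [hai, hbi]; exact lt_trans h hδ
      have := hM.ucf f i ε hε hε1 a b hab hd
      linarith
  | a14 R i ε q r qv rv z w xs hε hε1 hq hr hεr hδ =>
    intro σ
    rcases le_or_gt qv (dval K 𝔐 (σ z) (σ w)) with h | h
    · apply and_zero
      left
      rw [sub_val, dy_val K hq 𝔐 σ, dfml_var_val]
      exact sub_val_zero h
    · apply and_zero
      right
      rw [sub_val, sub_val, dy_val K hr 𝔐 σ]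
      apply sub_val_zero
      simp only [Fml.val]
      set a : Fin (K.rar R) → 𝔐.M :=
        fun j => Tm.val 𝔐 σ (if j = i then Tm.var z else Tm.var (xs j)) with ha
      set b : Fin (K.rar R) → 𝔐.M :=
        fun j => Tm.val 𝔐 σ (if j = i then Tm.var w else Tm.var (xs j)) with hb
      have hab : ∀ j, j ≠ i → a j = b j := by
        intro j hj; simp [ha, hb, if_neg hj]
      have hai : a i = σ z := by simp [ha, Tm.val]
      have hbi : b i = σ w := by simp [hb, Tm.val]
      have hd : dval K 𝔐 (a i) (b i) < K.δr R i ε := by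
        rw [hai, hbi]; exact lt_trans h hδ
      have habs := hM.ucr R i ε hε hε1 a b hab hd
      have := abs_le.1 habs
      apply max_le
      · linarith [this.2]
      · linarith
  | gen x φ hφ ih =>
    intro σ
    show (⨆ a, Fml.val 𝔐 (Function.update σ x a) φ) = 0
    have he : (fun a : 𝔐.M => Fml.val 𝔐 (Function.update σ x a) φ) = fun _ => 0 :=
      funext fun a => ih _
    rw [he, ciSup_const]

end Soundness2


/-- Soundness of continuous first-order logic: if `Γ ⊢ φ` then every
continuous pre-structure and assignment satisfying `Γ` satisfies `φ`;
consequently every satisfiable set of formulae is consistent. -/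
theorem soundness (K : MetSig) :
    (∀ (Γ : Set (Fml K.toSig)) (φ : Fml K.toSig), MDeriv K Γ φ →
      ∀ (𝔐 : PreS K.toSig), IsMetPre K 𝔐 → ∀ σ : ℕ → 𝔐.M,
        (∀ γ ∈ Γ, Fml.val 𝔐 σ γ = 0) → Fml.val 𝔐 σ φ = 0) ∧
    (∀ Γ : Set (Fml K.toSig),
      (∃ (𝔐 : PreS K.toSig) (_ : IsMetPre K 𝔐) (σ : ℕ → 𝔐.M),
        ∀ γ ∈ Γ, Fml.val 𝔐 σ γ = 0) →
      MConsistent K Γ) := by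
  have sound : ∀ (Γ : Set (Fml K.toSig)) (φ : Fml K.toSig), MDeriv K Γ φ →
      ∀ (𝔐 : PreS K.toSig), IsMetPre K 𝔐 → ∀ σ : ℕ → 𝔐.M,
        (∀ γ ∈ Γ, Fml.val 𝔐 σ γ = 0) → Fml.val 𝔐 σ φ = 0 := by
    intro Γ φ h
    induction h with
    | ax hA => intro 𝔐 hM σ hΓ; exact ax_sound K hA 𝔐 hM σ
    | hyp hγ => intro 𝔐 hM σ hΓ; exact hΓ _ hγ
    | @mp φ ψ h1 h2 ih1 ih2 =>
      intro 𝔐 hM σ hΓ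
      have e1 := ih1 𝔐 hM σ hΓ
      have e2 := ih2 𝔐 hM σ hΓ
      rw [sub_val, e1, sub_zero] at e2
      have hle : Fml.val 𝔐 σ ψ ≤ 0 := by
        rw [← e2]; exact le_max_left _ _
      linarith [val_nonneg 𝔐 ψ σ]
  refine ⟨sound, ?_⟩
  rintro Γ ⟨𝔐, hM, σ, hΓ⟩
  refine ⟨oneFml K, fun hd => ?_⟩
  have h0 := sound Γ _ hd 𝔐 hM σ hΓ
  rw [dy_val K DyFml.one 𝔐 σ] at h0
  exact one_ne_zero h0
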